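/- Let (V,c,p) and (V,c,p') be two instances of Asymmetric A Priori TSP on the same vertex set V and with the same cost function c, and let β ∈ [0,1] be such that β·p(v) ≤ p'(v) ≤ p(v) for all v ∈ V. Then for every tour T on V, E_{A∼p'}[c(T[A])] ≥ β² · E_{A∼p}[c(T[A])]. -/

import Mathlib

noncomputable section

/-- The cost of a tour given as a cyclic list: the sum of `c` over consecutive pairs
(cyclically). -/
def cycCost {V : Type*} (c : V → V → ℝ) (l : List V) : ℝ :=
  (List.zipWith c l (l.rotate 1)).sum

/-- `l` is a tour on the finite set `A`: a cyclic ordering of `A`, visiting each element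
exactly once. -/
def IsTour {V : Type*} [DecidableEq V] (A : Finset V) (l : List V) : Prop :=
  l.Nodup ∧ l.toFinset = A

/-- Short-cutting a tour to the set `A` of active vertices. -/
def shortcut {V : Type*} [DecidableEq V] (l : List V) (A : Finset V) : List V :=
  l.filter (fun v => v ∈ A)

/-- The expectation of `f` over the random set of active vertices, where each vertex `v`
is active independently with probability `p v`. -/
def apExpect {V : Type*} [Fintype V] [DecidableEq V] (p : V → ℝ) (f : Finset V → ℝ) : ℝ :=
  ∑ A : Finset V, (∏ v ∈ A, p v) * (∏ v ∈ Aᶜ, (1 - p v)) * f A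

namespace S14

open Finset

/-- cyclic distance from `u` to `v` along the tour `T`. -/
def Dd {V : Type*} [DecidableEq V] (T : List V) (u v : V) : ℕ :=
  (T.idxOf v + T.length - T.idxOf u) % T.length

/-- `v` is the next active vertex after `u` (both active, nothing active strictly
between them on the tour). -/
def Cond {V : Type*} [DecidableEq V] (T : List V) (A : Finset V) (u v : V) : Prop :=
  u ≠ v ∧ u ∈ A ∧ v ∈ A ∧ ∀ w ∈ A, ¬(0 < Dd T u w ∧ Dd T u w < Dd T u v)

instance {V : Type*} [DecidableEq V] (T : List V) (A : Finset V) (u v : V) :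
    Decidable (Cond T A u v) := by unfold Cond; infer_instance

lemma sum_zipWith {α β : Type*} (f : α → β → ℝ) :
    ∀ (l₁ : List α) (l₂ : List β) (h : l₂.length = l₁.length),
    (List.zipWith f l₁ l₂).sum = ∑ i : Fin l₁.length, f (l₁.get i) (l₂.get (Fin.cast h.symm i)) := by
  intro l₁
  induction l₁ with
  | nil => intro l₂ h; simp
  | cons a l ih =>
    intro l₂ h
    cases l₂ with
    | nil => simp at h
    | cons b l₂ =>
      simp only [List.zipWith, List.sum_cons]
      rw [ih l₂ (by simpa using h)]
      erw [Fin.sum_univ_succ]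
      congr 1

lemma cycCost_eq_sum {V : Type*} (c : V → V → ℝ) (l : List V) (hl : 0 < l.length) :
    cycCost c l = ∑ i : Fin l.length,
      c (l.get i) (l.get ⟨(i + 1) % l.length, Nat.mod_lt _ hl⟩) := by
  unfold cycCost
  rw [sum_zipWith c l (l.rotate 1) (by simp)]
  apply Finset.sum_congr rfl
  intro i _
  rw [List.get_rotate]
  rfl


variable {V : Type*} [Fintype V] [DecidableEq V]

lemma cyc_eq_pairs (c : V → V → ℝ) (hcrefl : ∀ v, c v v = 0)
    (T : List V) (hnd : T.Nodup) (hTu : T.toFinset = Finset.univ) (A : Finset V) :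
    cycCost c (shortcut T A) =
      ∑ uv ∈ Finset.univ ×ˢ Finset.univ,
        (if Cond T A uv.1 uv.2 then c uv.1 uv.2 else 0) := by
  classical
  set lA := shortcut T A with hlA
  have hnd' : lA.Nodup := hnd.filter _
  have hto : lA.toFinset = A := by
    rw [hlA]
    unfold shortcut
    rw [List.toFinset_filter, hTu]
    simp
  have memT : ∀ v : V, v ∈ T := fun v => by
    rw [← List.mem_toFinset, hTu]; exact Finset.mem_univ v
  have hn : ∀ v : V, T.idxOf v < T.length := fun v => List.idxOf_lt_length_iff.mpr (memT v)
  have idxinj : ∀ u v : V, T.idxOf u = T.idxOf v → u = v := by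
    intro u v h
    have h1 := List.idxOf_get (hn u)
    have h2 := List.idxOf_get (hn v)
    rw [← h1, ← h2]
    exact congrArg T.get (Fin.ext h)
  have hD : ∀ u v : V, Dd T u v = if T.idxOf u ≤ T.idxOf v
      then T.idxOf v - T.idxOf u else T.idxOf v + T.length - T.idxOf u := by
    intro u v
    have hu := hn u; have hv := hn v
    unfold Dd
    split_ifs with h
    · have e : T.idxOf v + T.length - T.idxOf u
          = T.length + (T.idxOf v - T.idxOf u) := by omega
      rw [e, Nat.add_mod_left, Nat.mod_eq_of_lt (by omega)]
    · exact Nat.mod_eq_of_lt (by omega)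
  have hD0 : ∀ u v : V, Dd T u v = 0 ↔ u = v := by
    intro u v
    constructor
    · intro h
      apply idxinj
      rw [hD] at h
      have hu := hn u; have hv := hn v
      split_ifs at h <;> omega
    · rintro rfl; rw [hD]; simp
  have hDinj : ∀ u v v' : V, Dd T u v = Dd T u v' → v = v' := by
    intro u v v' h
    rw [hD, hD] at h
    have hu := hn u; have hv := hn v; have hv' := hn v'
    apply idxinj
    split_ifs at h <;> omega
  have hcard : A.card = lA.length := by
    rw [← hto]; exact List.toFinset_card_of_nodup hnd'
  rcases Nat.lt_or_ge lA.length 2 with hm | hm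
  · -- degenerate case: at most one active vertex
    have hRHS : ∑ uv ∈ Finset.univ ×ˢ Finset.univ,
        (if Cond T A uv.1 uv.2 then c uv.1 uv.2 else 0) = 0 := by
      apply Finset.sum_eq_zero
      intro uv _
      rw [if_neg]
      rintro ⟨hne, hu, hv, -⟩
      exact hne (Finset.card_le_one.mp (by omega) _ hu _ hv)
    rw [hRHS]
    have : lA.length = 0 ∨ lA.length = 1 := by omega
    rcases this with h | h
    · rw [List.length_eq_zero_iff.mp h]; simp [cycCost]
    · obtain ⟨x, hx⟩ := List.length_eq_one_iff.mp h
      rw [hx]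
      simp [cycCost, List.rotate_singleton, hcrefl]
  · -- main case
    have hm0 : 0 < lA.length := by omega
    rw [cycCost_eq_sum c lA hm0, ← Finset.sum_filter]
    set a : Fin lA.length → ℕ := fun i => T.idxOf (lA.get i) with ha
    have amono : ∀ i j : Fin lA.length, i < j → a i < a j := by
      have hp : List.Pairwise (fun u v => T.idxOf u < T.idxOf v) T := by
        rw [List.pairwise_iff_get]
        intro i j hij
        rw [List.get_idxOf hnd, List.get_idxOf hnd]
        exact hij
      have hp' := hp.filter (fun v => decide (v ∈ A))
      rw [List.pairwise_iff_get] at hp'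
      exact hp'
    have amono' : ∀ i j : Fin lA.length, i ≤ j → a i ≤ a j := by
      intro i j hij
      rcases eq_or_lt_of_le hij with h | h
      · rw [h]
      · exact le_of_lt (amono _ _ h)
    have ha_lt : ∀ i, a i < T.length := fun i => hn _
    have memA : ∀ i : Fin lA.length, lA.get i ∈ A := by
      intro i
      rw [← hto]
      exact List.mem_toFinset.mpr (lA.get_mem i)
    have hDget : ∀ i j : Fin lA.length, Dd T (lA.get i) (lA.get j)
        = if a i ≤ a j then a j - a i else a j + T.length - a i := fun i j => hD _ _
    have hcondget : ∀ k : Fin lA.length,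
        Cond T A (lA.get k) (lA.get ⟨(k + 1) % lA.length, Nat.mod_lt _ hm0⟩) := by
      intro k
      set k' : Fin lA.length := ⟨(k + 1) % lA.length, Nat.mod_lt _ hm0⟩ with hk'
      refine ⟨?_, memA k, memA k', ?_⟩
      · intro h
        rw [hnd'.get_inj_iff] at h
        have hval := congrArg Fin.val h
        simp only [hk'] at hval
        have h2 := k.2
        rcases Nat.lt_or_ge (k.1 + 1) lA.length with hlt | hge
        · rw [Nat.mod_eq_of_lt hlt] at hval; omega
        · have e : k.1 + 1 = lA.length := by omega
          rw [e, Nat.mod_self] at hval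
          omega
      · intro w hw
        obtain ⟨jw, hjw⟩ := List.mem_iff_get.mp (by rw [← hto] at hw; exact List.mem_toFinset.mp hw)
        rw [← hjw, hDget, hDget]
        have hak := ha_lt k; have hak' := ha_lt k'; have haj := ha_lt jw
        rcases Nat.lt_or_ge (k.1 + 1) lA.length with hlt | hge
        · have hk'v : k'.1 = k.1 + 1 := Nat.mod_eq_of_lt hlt
          have e1 : a k < a k' := amono _ _ (by rw [Fin.lt_def, hk'v]; omega)
          rintro ⟨h1, h2⟩
          split_ifs at h1 h2 with hc1 hc2 <;> try omega
          -- remaining: a k ≤ a jw and a k ≤ a k'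
          · have hkj : k < jw := by
              by_contra hcon
              push_neg at hcon
              have := amono' _ _ hcon
              omega
            have : a k' ≤ a jw := amono' _ _ (by rw [Fin.le_def, hk'v]; omega)
            omega
        · have hkv : k.1 + 1 = lA.length := by omega
          have hk'v : k'.1 = 0 := by simp only [hk']; rw [hkv, Nat.mod_self]
          have h0k : a k' < a k := amono _ _ (by rw [Fin.lt_def, hk'v]; omega)
          rintro ⟨h1, h2⟩
          have hjk : a jw ≤ a k := amono' _ _ (by rw [Fin.le_def]; omega)
          have hk'j : a k' ≤ a jw := amono' _ _ (by rw [Fin.le_def, hk'v]; omega)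
          split_ifs at h1 h2 <;> omega
    refine Finset.sum_nbij'
      (i := fun k : Fin lA.length => (lA.get k, lA.get ⟨(k + 1) % lA.length, Nat.mod_lt _ hm0⟩))
      (j := fun uv => ⟨lA.idxOf uv.1 % lA.length, Nat.mod_lt _ hm0⟩) ?_ ?_ ?_ ?_ ?_
    · intro k _
      rw [Finset.mem_filter]
      exact ⟨Finset.mem_product.mpr ⟨Finset.mem_univ _, Finset.mem_univ _⟩, hcondget k⟩
    · intro uv _; exact Finset.mem_univ _
    · intro k _
      apply Fin.ext
      simp only [List.get_idxOf hnd']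
      exact Nat.mod_eq_of_lt k.2
    · intro uv huv
      rw [Finset.mem_filter] at huv
      obtain ⟨-, hne, hu, hv, hbtw⟩ := huv
      have hul : uv.1 ∈ lA := by rw [← List.mem_toFinset, hto]; exact hu
      have hiu : lA.idxOf uv.1 < lA.length := List.idxOf_lt_length_iff.mpr hul
      set k : Fin lA.length := ⟨lA.idxOf uv.1 % lA.length, Nat.mod_lt _ hm0⟩ with hk
      have hkv : k.1 = lA.idxOf uv.1 := Nat.mod_eq_of_lt hiu
      have hget1 : lA.get k = uv.1 := by
        rw [hk]
        have : (⟨lA.idxOf uv.1 % lA.length, Nat.mod_lt _ hm0⟩ : Fin lA.length)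
            = ⟨lA.idxOf uv.1, hiu⟩ := Fin.ext (Nat.mod_eq_of_lt hiu)
        rw [this]
        exact List.idxOf_get hiu
      have hcond2 := hcondget k
      set v' := lA.get ⟨(k.1 + 1) % lA.length, Nat.mod_lt _ hm0⟩ with hv'
      rw [hget1] at hcond2
      obtain ⟨hne2, -, hv2, hbtw2⟩ := hcond2
      have hDv : Dd T uv.1 uv.2 ≠ 0 := fun h => hne ((hD0 _ _).mp h)
      have hDv2 : Dd T uv.1 v' ≠ 0 := fun h => hne2 ((hD0 _ _).mp h)
      have hb1 := hbtw v' hv2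
      have hb2 := hbtw2 uv.2 hv
      have hEq : Dd T uv.1 uv.2 = Dd T uv.1 v' := by omega
      have hvv : uv.2 = v' := hDinj _ _ _ hEq
      show (lA.get k, v') = uv
      rw [Prod.ext_iff]
      exact ⟨hget1, hvv.symm⟩
    · intro k _; rfl

lemma expect_ind (q : V → ℝ) (u v : V) (huv : u ≠ v) (Dst : Finset V)
    (hu : u ∉ Dst) (hv : v ∉ Dst) :
    ∑ A : Finset V, ((∏ w ∈ A, q w) * (∏ w ∈ Aᶜ, (1 - q w)) *
        (if u ∈ A ∧ v ∈ A ∧ ∀ w ∈ A, w ∉ Dst then 1 else 0))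
      = q u * q v * ∏ w ∈ Dst, (1 - q w) := by
  classical
  simp only [mul_ite, mul_one, mul_zero]
  rw [← Finset.sum_filter]
  set S : Finset V := {u, v} with hS
  set R : Finset V := (S ∪ Dst)ᶜ with hR
  have hSD : ∀ x ∈ S, x ∉ Dst := by
    intro x hx
    rcases Finset.mem_insert.mp hx with h | h
    · exact h ▸ hu
    · exact (Finset.mem_singleton.mp h) ▸ hv
  have hRS : ∀ x ∈ R, x ∉ S ∧ x ∉ Dst := by
    intro x hx
    have hx' := Finset.mem_compl.mp hx
    rw [Finset.mem_union] at hx'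
    tauto
  have hSsub : ∀ A ∈ Finset.univ.filter
      (fun A : Finset V => u ∈ A ∧ v ∈ A ∧ ∀ w ∈ A, w ∉ Dst), S ⊆ A := by
    intro A hA
    rw [Finset.mem_filter] at hA
    obtain ⟨-, hu', hv', -⟩ := hA
    intro x hx
    rcases Finset.mem_insert.mp hx with h | h
    · exact h ▸ hu'
    · exact (Finset.mem_singleton.mp h) ▸ hv'
  have hi : ∀ A ∈ Finset.univ.filter
      (fun A : Finset V => u ∈ A ∧ v ∈ A ∧ ∀ w ∈ A, w ∉ Dst), A \ S ∈ R.powerset := by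
    intro A hA
    rw [Finset.mem_filter] at hA
    obtain ⟨-, hu', hv', hA3⟩ := hA
    rw [Finset.mem_powerset]
    intro x hx
    rw [Finset.mem_sdiff] at hx
    rw [hR, Finset.mem_compl, Finset.mem_union]
    push_neg
    exact ⟨hx.2, hA3 x hx.1⟩
  have key : ∀ t ∈ R.powerset,
      (∏ w ∈ S ∪ t, q w) * ∏ w ∈ (S ∪ t)ᶜ, (1 - q w)
        = (q u * q v * ∏ w ∈ Dst, (1 - q w)) *
            ((∏ w ∈ t, q w) * ∏ w ∈ R \ t, (1 - q w)) := by
    intro t ht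
    rw [Finset.mem_powerset] at ht
    have hdisjSt : Disjoint S t := by
      rw [Finset.disjoint_left]
      intro x hxS hxt
      exact (hRS x (ht hxt)).1 hxS
    have hcompl : (S ∪ t)ᶜ = Dst ∪ (R \ t) := by
      ext x
      have h1 : x ∈ t → x ∉ S ∧ x ∉ Dst := fun hx => hRS x (ht hx)
      have h2 : x ∈ S → x ∉ Dst := hSD x
      simp only [Finset.mem_compl, Finset.mem_union, Finset.mem_sdiff, hR]
      tauto
    have hdisjD : Disjoint Dst (R \ t) := by
      rw [Finset.disjoint_left]
      intro x hxD hxR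
      exact (hRS x (Finset.mem_sdiff.mp hxR).1).2 hxD
    rw [Finset.prod_union hdisjSt, hcompl, Finset.prod_union hdisjD, hS,
      Finset.prod_pair huv]
    ring
  have step : ∑ A ∈ Finset.univ.filter
      (fun A : Finset V => u ∈ A ∧ v ∈ A ∧ ∀ w ∈ A, w ∉ Dst),
        ((∏ w ∈ A, q w) * ∏ w ∈ Aᶜ, (1 - q w))
      = ∑ t ∈ R.powerset, (q u * q v * ∏ w ∈ Dst, (1 - q w)) *
          ((∏ w ∈ t, q w) * ∏ w ∈ R \ t, (1 - q w)) := by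
    refine Finset.sum_nbij' (i := fun A => A \ S) (j := fun t => S ∪ t) hi ?_ ?_ ?_ ?_
    · intro t ht
      rw [Finset.mem_powerset] at ht
      rw [Finset.mem_filter]
      refine ⟨Finset.mem_univ _, ?_, ?_, ?_⟩
      · exact Finset.mem_union_left _ (by simp [hS])
      · exact Finset.mem_union_left _ (by simp [hS])
      · intro w hw
        rcases Finset.mem_union.mp hw with h | h
        · exact hSD w h
        · exact (hRS w (ht h)).2
    · intro A hA
      exact Finset.union_sdiff_of_subset (hSsub A hA)
    · intro t ht
      rw [Finset.mem_powerset] at ht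
      ext x
      rw [Finset.mem_sdiff, Finset.mem_union]
      constructor
      · rintro ⟨h | h, hxS⟩
        · exact absurd h hxS
        · exact h
      · intro hx
        exact ⟨Or.inr hx, (hRS x (ht hx)).1⟩
    · intro A hA
      have h1 := key (A \ S) (hi A hA)
      rw [Finset.union_sdiff_of_subset (hSsub A hA)] at h1
      exact h1
  rw [step, ← Finset.mul_sum, ← Finset.prod_add]
  have hone : ∏ w ∈ R, (q w + (1 - q w)) = 1 :=
    Finset.prod_eq_one (fun w _ => by ring)
  rw [hone, mul_one]

lemma apExpect_eq (c : V → V → ℝ) (hcrefl : ∀ v, c v v = 0)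
    (T : List V) (hnd : T.Nodup) (hTu : T.toFinset = Finset.univ) (q : V → ℝ) :
    apExpect q (fun A => cycCost c (shortcut T A)) =
      ∑ uv ∈ Finset.univ ×ˢ Finset.univ,
        (if uv.1 = uv.2 then 0 else
          c uv.1 uv.2 * (q uv.1 * q uv.2 *
            ∏ w ∈ Finset.univ.filter
              (fun w => 0 < Dd T uv.1 w ∧ Dd T uv.1 w < Dd T uv.1 uv.2),
              (1 - q w))) := by
  classical
  unfold apExpect
  have h1 : ∀ A : Finset V, cycCost c (shortcut T A)
      = ∑ uv ∈ Finset.univ ×ˢ Finset.univ,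
          (if Cond T A uv.1 uv.2 then c uv.1 uv.2 else 0) :=
    fun A => cyc_eq_pairs c hcrefl T hnd hTu A
  simp only [h1, Finset.mul_sum]
  rw [Finset.sum_comm]
  apply Finset.sum_congr rfl
  intro uv _
  by_cases huv : uv.1 = uv.2
  · rw [if_pos huv]
    apply Finset.sum_eq_zero
    intro A _
    rw [if_neg (fun hC => hC.1 huv), mul_zero]
  · rw [if_neg huv]
    set F : Finset V := Finset.univ.filter
        (fun w => 0 < Dd T uv.1 w ∧ Dd T uv.1 w < Dd T uv.1 uv.2) with hF
    have hceq : ∀ A : Finset V, (if Cond T A uv.1 uv.2 then c uv.1 uv.2 else 0)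
        = c uv.1 uv.2 *
          (if uv.1 ∈ A ∧ uv.2 ∈ A ∧ ∀ w ∈ A, w ∉ F then 1 else 0) := by
      intro A
      by_cases hC : Cond T A uv.1 uv.2
      · obtain ⟨-, hm1, hm2, hm3⟩ := id hC
        rw [if_pos hC, if_pos, mul_one]
        refine ⟨hm1, hm2, fun w hw hwF => ?_⟩
        rw [hF, Finset.mem_filter] at hwF
        exact hm3 w hw hwF.2
      · rw [if_neg hC, if_neg, mul_zero]
        rintro ⟨hm1, hm2, hm3⟩
        exact hC ⟨huv, hm1, hm2, fun w hw hx =>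
          hm3 w hw (by rw [hF, Finset.mem_filter]; exact ⟨Finset.mem_univ _, hx⟩)⟩
    simp only [hceq]
    have hBu : uv.1 ∉ F := by
      rw [hF, Finset.mem_filter]
      rintro ⟨-, h0, -⟩
      have : Dd T uv.1 uv.1 = 0 := by
        unfold Dd
        rw [Nat.add_sub_cancel_left, Nat.mod_self]
      omega
    have hBv : uv.2 ∉ F := by
      rw [hF, Finset.mem_filter]
      rintro ⟨-, -, h0⟩
      omega
    calc ∑ A : Finset V, (∏ w ∈ A, q w) * (∏ w ∈ Aᶜ, (1 - q w)) *
          (c uv.1 uv.2 * (if uv.1 ∈ A ∧ uv.2 ∈ A ∧ ∀ w ∈ A, w ∉ F then 1 else 0))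
        = c uv.1 uv.2 * ∑ A : Finset V, ((∏ w ∈ A, q w) * (∏ w ∈ Aᶜ, (1 - q w)) *
            (if uv.1 ∈ A ∧ uv.2 ∈ A ∧ ∀ w ∈ A, w ∉ F then 1 else 0)) := by
          rw [Finset.mul_sum]
          exact Finset.sum_congr rfl (fun A _ => by ring)
      _ = c uv.1 uv.2 * (q uv.1 * q uv.2 * ∏ w ∈ F, (1 - q w)) := by
          rw [expect_ind q uv.1 uv.2 huv F hBu hBv]

end S14


/-- decreasing each activation probability by a factor of at most `β`
decreases the expected short-cut cost of any fixed tour by a factor of at most `β²`. -/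
theorem statement14 {V : Type*} [Fintype V] [DecidableEq V]
    (c : V → V → ℝ) (p p' : V → ℝ) (β : ℝ)
    (hc0 : ∀ x y, 0 ≤ c x y)
    (hcrefl : ∀ v, c v v = 0)
    (htri : ∀ x y z, c x z ≤ c x y + c y z)
    (hp0 : ∀ v, 0 ≤ p v) (hp1 : ∀ v, p v ≤ 1)
    (hp'0 : ∀ v, 0 ≤ p' v) (hp'1 : ∀ v, p' v ≤ 1)
    (hβ0 : 0 ≤ β) (hβ1 : β ≤ 1)
    (hlow : ∀ v, β * p v ≤ p' v) (hhigh : ∀ v, p' v ≤ p v)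
    (T : List V) (hT : IsTour Finset.univ T) :
    β ^ 2 * apExpect p (fun A => cycCost c (shortcut T A)) ≤
      apExpect p' (fun A => cycCost c (shortcut T A)) := by
  classical
  obtain ⟨hnd, hTu⟩ := hT
  rw [S14.apExpect_eq c hcrefl T hnd hTu p, S14.apExpect_eq c hcrefl T hnd hTu p',
    Finset.mul_sum]
  apply Finset.sum_le_sum
  intro uv _
  by_cases h : uv.1 = uv.2
  · rw [if_pos h, if_pos h, mul_zero]
  · rw [if_neg h, if_neg h]
    set F : Finset V := Finset.univ.filter
        (fun w => 0 < S14.Dd T uv.1 w ∧ S14.Dd T uv.1 w < S14.Dd T uv.1 uv.2) with hF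
    have hP0 : (0:ℝ) ≤ ∏ w ∈ F, (1 - p w) :=
      Finset.prod_nonneg (fun w _ => by linarith [hp1 w])
    have hPP : ∏ w ∈ F, (1 - p w) ≤ ∏ w ∈ F, (1 - p' w) :=
      Finset.prod_le_prod (fun w _ => by linarith [hp1 w]) (fun w _ => by linarith [hhigh w])
    calc β ^ 2 * (c uv.1 uv.2 * (p uv.1 * p uv.2 * ∏ w ∈ F, (1 - p w)))
        = c uv.1 uv.2 * ((β * p uv.1) * ((β * p uv.2) * ∏ w ∈ F, (1 - p w))) := by ring
      _ ≤ c uv.1 uv.2 * (p' uv.1 * (p' uv.2 * ∏ w ∈ F, (1 - p' w))) := by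
          apply mul_le_mul_of_nonneg_left _ (hc0 _ _)
          apply mul_le_mul (hlow _) ?_ ?_ (hp'0 _)
          · exact mul_le_mul (hlow _) hPP hP0 (hp'0 _)
          · exact mul_nonneg (mul_nonneg hβ0 (hp0 _)) hP0
      _ = c uv.1 uv.2 * (p' uv.1 * p' uv.2 * ∏ w ∈ F, (1 - p' w)) := by ring

end
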